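/- Let α, β, k be real numbers with α > −1, β > −1 and 0 < k < β + 1. For n ≥ 0 define the 2×2 real matrices A_n = [[ (β+n+2)(k+n)(α+β+n+2)/((k+n+1)(α+β+2n+2)(α+β+2n+3)), 0 ], [ k(β+n+2)/((α+β−k+n+3)(α+β+2n+3)(k+n+1)), (β+n+2)(α+β+n+3)(α+β−k+n+2)/((α+β+2n+3)(α+β+2n+4)(α+β−k+n+3)) ]] and L_n = [[ (n+k)(α+β+n+2)_n/(k·(β+2)_n), 0 ], [ −n(α+β+n+3)_n/((α+β−k+2)(β+2)_n), (α+β+n−k+2)(α+β+n+3)_n/((α+β−k+2)(β+2)_n) ]]. Then for every n ≥ 0, L_n · (A_0 A_1 ⋯ A_{n−1}) = I₂, where the product is taken in increasing order of indices and the empty product (n = 0) is I₂. In particular L_n = (A_0 ⋯ A_{n−1})^{−1}. -/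

import Mathlib

open Matrix

/-- Pochhammer symbol `(a)_n = a(a+1)⋯(a+n-1)`, with `(a)_0 = 1`. -/
noncomputable def poch (a : ℝ) (n : ℕ) : ℝ := ∏ j ∈ Finset.range n, (a + j)

/-- The superdiagonal blocks `A n` of the `d = 2` Jacobi-type example. -/
noncomputable def Amat (α β k : ℝ) (n : ℕ) : Matrix (Fin 2) (Fin 2) ℝ :=
  !![(β + (n : ℝ) + 2) * (k + (n : ℝ)) * (α + β + (n : ℝ) + 2) /
       ((k + (n : ℝ) + 1) * (α + β + 2 * (n : ℝ) + 2) * (α + β + 2 * (n : ℝ) + 3)),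
     0;
     k * (β + (n : ℝ) + 2) /
       ((α + β - k + (n : ℝ) + 3) * (α + β + 2 * (n : ℝ) + 3) * (k + (n : ℝ) + 1)),
     (β + (n : ℝ) + 2) * (α + β + (n : ℝ) + 3) * (α + β - k + (n : ℝ) + 2) /
       ((α + β + 2 * (n : ℝ) + 3) * (α + β + 2 * (n : ℝ) + 4) *
         (α + β - k + (n : ℝ) + 3))]

/-- The matrix `L n = (A 0 ⋯ A (n-1))⁻¹` of the `d = 2` Jacobi-type example. -/
noncomputable def Lmat (α β k : ℝ) (n : ℕ) : Matrix (Fin 2) (Fin 2) ℝ :=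
  !![((n : ℝ) + k) * poch (α + β + (n : ℝ) + 2) n / (k * poch (β + 2) n), 0;
     -((n : ℝ) * poch (α + β + (n : ℝ) + 3) n) /
       ((α + β - k + 2) * poch (β + 2) n),
     (α + β + (n : ℝ) - k + 2) * poch (α + β + (n : ℝ) + 3) n /
       ((α + β - k + 2) * poch (β + 2) n)]


lemma poch_zero (a : ℝ) : poch a 0 = 1 := by simp [poch]

lemma poch_succ (a : ℝ) (n : ℕ) : poch a (n+1) = poch a n * (a + n) := by
  simp [poch, Finset.prod_range_succ]

lemma poch_succ' (a : ℝ) (n : ℕ) : poch a (n+1) = a * poch (a+1) n := by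
  simp only [poch, Finset.prod_range_succ']
  rw [mul_comm]
  congr 1
  · push_cast; simp
  · apply Finset.prod_congr rfl; intro j _; push_cast; ring

lemma poch_pos {a : ℝ} (ha : 0 < a) (n : ℕ) : 0 < poch a n := by
  apply Finset.prod_pos
  intro j _
  have : (0:ℝ) ≤ j := Nat.cast_nonneg j
  linarith

set_option maxHeartbeats 1000000 in
lemma key_lemma (α β k : ℝ) (hα : α > -1) (hβ : β > -1)
    (hk : 0 < k) (hkβ : k < β + 1) (n : ℕ) :
    Amat α β k n * Lmat α β k (n+1) = Lmat α β k n := by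
  have hn : (0:ℝ) ≤ n := Nat.cast_nonneg n
  have h1 : (0:ℝ) < k + n + 1 := by linarith
  have h2 : (0:ℝ) < α + β + 2*n + 2 := by linarith
  have h3 : (0:ℝ) < α + β + 2*n + 3 := by linarith
  have h4 : (0:ℝ) < α + β + 2*n + 4 := by linarith
  have h5 : (0:ℝ) < α + β - k + n + 3 := by linarith
  have h6 : (0:ℝ) < α + β - k + 2 := by linarith
  have h7 : (0:ℝ) < β + n + 2 := by linarith
  have h8 : (0:ℝ) < α + β + n + 2 := by linarith
  have h9 : (0:ℝ) < α + β + n + 3 := by linarith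
  have hQ : (0:ℝ) < poch (β+2) n := poch_pos (by linarith) n
  -- Pochhammer relations
  have hP1 : poch (α + β + (n:ℝ) + 2) n =
      (α + β + (n:ℝ) + 2) * poch (α + β + (n:ℝ) + 3) n / (α + β + 2*(n:ℝ) + 2) := by
    have e1 := poch_succ (α + β + (n:ℝ) + 2) n
    have e2 := poch_succ' (α + β + (n:ℝ) + 2) n
    have e3 : α + β + (n:ℝ) + 2 + 1 = α + β + (n:ℝ) + 3 := by ring
    rw [e3] at e2
    field_simp
    rw [eq_div_iff (by linarith)]
    nlinarith [e1, e2]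
  have hP2 : poch (α + β + (n:ℝ) + 4) n =
      poch (α + β + (n:ℝ) + 3) n * (α + β + 2*(n:ℝ) + 3) / (α + β + (n:ℝ) + 3) := by
    have e1 := poch_succ (α + β + (n:ℝ) + 3) n
    have e2 := poch_succ' (α + β + (n:ℝ) + 3) n
    have e3 : α + β + (n:ℝ) + 3 + 1 = α + β + (n:ℝ) + 4 := by ring
    rw [e3] at e2
    field_simp
    nlinarith [e1, e2]
  have h1' := h1.ne'
  have h2' := h2.ne'
  have h3' := h3.ne'
  have h4' := h4.ne'
  have h5' := h5.ne'
  have h6' := h6.ne'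
  have h7' := h7.ne'
  have h8' := h8.ne'
  have h9' := h9.ne'
  have hQ' := hQ.ne'
  have hk' := hk.ne'
  have cast1 : ((n+1 : ℕ) : ℝ) = (n:ℝ) + 1 := by push_cast; ring
  ext i j
  fin_cases i <;> fin_cases j <;>
    simp only [Amat, Lmat, Matrix.mul_apply, Fin.sum_univ_two, Fin.zero_eta, Fin.mk_one,
      Matrix.cons_val', Matrix.cons_val_zero, Matrix.cons_val_one, Matrix.head_cons,
      Matrix.head_fin_const, Matrix.empty_val', Matrix.cons_val_fin_one, Matrix.of_apply,
      cast1]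
  · -- (0,0)
    have e1 : α + β + ((n:ℝ)+1) + 2 = α + β + (n:ℝ) + 3 := by ring
    rw [e1, poch_succ, poch_succ (β+2) n, hP1]
    have e3 : α + β + (n:ℝ) + 3 + (n:ℝ) = α + β + 2*(n:ℝ) + 3 := by ring
    have e2 : β + 2 + (n:ℝ) = β + (n:ℝ) + 2 := by ring
    rw [e3, e2]
    set P := poch (α+β+(n:ℝ)+3) n with hP
    set Q := poch (β+2) n with hQdef
    set b2 := β + (n:ℝ) + 2 with hb2
    set t2 := α + β + 2*(n:ℝ) + 2 with ht2
    set t3 := α + β + 2*(n:ℝ) + 3 with ht3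
    set s2 := α + β + (n:ℝ) + 2 with hs2
    clear_value P Q b2 t2 t3 s2
    field_simp
    ring
  · -- (0,1)
    simp
  · -- (1,0)
    have e1 : α + β + ((n:ℝ)+1) + 2 = α + β + (n:ℝ) + 3 := by ring
    have e2 : α + β + ((n:ℝ)+1) + 3 = α + β + (n:ℝ) + 4 := by ring
    rw [e1, e2, poch_succ (α+β+(n:ℝ)+3) n, poch_succ (α+β+(n:ℝ)+4) n, poch_succ (β+2) n, hP2]
    have e3 : α + β + (n:ℝ) + 3 + (n:ℝ) = α + β + 2*(n:ℝ) + 3 := by ring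
    have e4 : α + β + (n:ℝ) + 4 + (n:ℝ) = α + β + 2*(n:ℝ) + 4 := by ring
    have e7 : β + 2 + (n:ℝ) = β + (n:ℝ) + 2 := by ring
    have f1 : α + β - k + (n:ℝ) + 3 = (α + β - k + 2) + ((n:ℝ)+1) := by ring
    have f2 : α + β - k + (n:ℝ) + 2 = (α + β - k + 2) + (n:ℝ) := by ring
    have g5 : (α + β - k + 2) + ((n:ℝ)+1) ≠ 0 := by intro h; nlinarith
    rw [e3, e4, e7, f1, f2]
    set P := poch (α+β+(n:ℝ)+3) n with hP
    set Q := poch (β+2) n with hQdef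
    set b2 := β + (n:ℝ) + 2 with hb2
    set t3 := α + β + 2*(n:ℝ) + 3 with ht3
    set t4 := α + β + 2*(n:ℝ) + 4 with ht4
    set s3 := α + β + (n:ℝ) + 3 with hs3
    set c := α + β - k + 2 with hc
    clear_value P Q b2 t3 t4 s3 c
    field_simp
    ring
  · -- (1,1)
    have e2 : α + β + ((n:ℝ)+1) + 3 = α + β + (n:ℝ) + 4 := by ring
    rw [e2, poch_succ, poch_succ (β+2) n, hP2]
    have e4 : α + β + (n:ℝ) + 4 + (n:ℝ) = α + β + 2*(n:ℝ) + 4 := by ring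
    have e7 : β + 2 + (n:ℝ) = β + (n:ℝ) + 2 := by ring
    have f2 : α + β - k + (n:ℝ) + 2 = (α + β - k + 2) + (n:ℝ) := by ring
    have f3 : α + β + ((n:ℝ)+1) - k + 2 = (α + β - k + 2) + ((n:ℝ)+1) := by ring
    have f4 : α + β + (n:ℝ) - k + 2 = (α + β - k + 2) + (n:ℝ) := by ring
    have f1 : α + β - k + (n:ℝ) + 3 = (α + β - k + 2) + ((n:ℝ)+1) := by ring
    have g5 : (α + β - k + 2) + ((n:ℝ)+1) ≠ 0 := by intro h; nlinarith
    rw [e4, e7, f1, f2, f3, f4]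
    set P := poch (α+β+(n:ℝ)+3) n with hP
    set Q := poch (β+2) n with hQdef
    set b2 := β + (n:ℝ) + 2 with hb2
    set t3 := α + β + 2*(n:ℝ) + 3 with ht3
    set t4 := α + β + 2*(n:ℝ) + 4 with ht4
    set s3 := α + β + (n:ℝ) + 3 with hs3
    set c := α + β - k + 2 with hc
    clear_value P Q b2 t3 t4 s3 c
    field_simp
    ring

/-- `L n` is the inverse of the ordered product `A 0 ⋯ A (n-1)`. -/
theorem stmt_10 (α β k : ℝ) (hα : α > -1) (hβ : β > -1)
    (hk : 0 < k) (hkβ : k < β + 1) :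
    ∀ n : ℕ,
      Lmat α β k n * ((List.range n).map (Amat α β k)).prod = 1 ∧
      Lmat α β k n = (((List.range n).map (Amat α β k)).prod)⁻¹ := by
  have hab : α + β - k + 2 > 0 := by linarith
  have hk0 : k ≠ 0 := ne_of_gt hk
  have main : ∀ n : ℕ, Lmat α β k n * ((List.range n).map (Amat α β k)).prod = 1 := by
    intro n
    induction n with
    | zero =>
      simp only [List.range_zero, List.map_nil, List.prod_nil, mul_one]
      show Lmat α β k 0 = 1
      have : Lmat α β k 0 = !![1, 0; 0, 1] := by
        simp only [Lmat, poch_zero, Nat.cast_zero]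
        congr 1 <;> try rfl
        · simp [hk0, hab.ne']
      rw [this, ← Matrix.one_fin_two]
    | succ n ih =>
      have hP : (List.range (n+1)).map (Amat α β k) =
          ((List.range n).map (Amat α β k)) ++ [Amat α β k n] := by
        rw [List.range_succ, List.map_append]; rfl
      rw [hP, List.prod_append, List.prod_singleton]
      have hflip : ((List.range n).map (Amat α β k)).prod * Lmat α β k n = 1 :=
        mul_eq_one_comm.mp ih
      have hkey := key_lemma α β k hα hβ hk hkβ n
      have : (((List.range n).map (Amat α β k)).prod * Amat α β k n) *
          Lmat α β k (n+1) = 1 := by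
        rw [mul_assoc, hkey, hflip]
      exact mul_eq_one_comm.mp this
  intro n
  refine ⟨main n, ?_⟩
  exact (Matrix.inv_eq_left_inv (main n)).symm
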